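/- Let A be a C*-algebra (over ℂ) equipped with an action of the circle group 𝕋 by *-automorphisms, i.e. a group homomorphism ρ from 𝕋 to the group of *-automorphisms of A such that for each a ∈ A the map z ↦ ρ_z(a) is continuous. For n ∈ ℤ, let A(n) = { a ∈ A : ρ_z(a) = zⁿ·a for all z ∈ 𝕋 } be the spectral subspace of homogeneous elements of degree n (zⁿ acting by scalar multiplication via the inclusion 𝕋 ⊂ ℂ). Then the linear span of ⋃_{n∈ℤ} A(n) is norm-dense in A. -/

import Mathlib

open MeasureTheory Submodule Set

noncomputable instance : MeasurableSpace Circle := borel _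
instance : BorelSpace Circle := ⟨rfl⟩

namespace Stmt12Aux

lemma circle_coe_zpow (z : Circle) (n : ℤ) : ((z ^ n : Circle) : ℂ) = (z : ℂ) ^ n :=
  map_zpow' Circle.coeHom Circle.coe_inv z n

/-- The character `z ↦ z ^ n` on the circle, as a continuous map. -/
noncomputable def char (n : ℤ) : C(Circle, ℂ) :=
  ⟨fun z => (z : ℂ) ^ n, by
    have : Continuous fun z : Circle => ((z ^ n : Circle) : ℂ) :=
      continuous_induced_dom.comp (continuous_zpow n)
    simpa only [circle_coe_zpow] using this⟩

@[simp] lemma char_apply (n : ℤ) (z : Circle) : char n z = (z : ℂ) ^ n := rfl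

/-- The star subalgebra generated by the characters. -/
noncomputable def charSubalgebra : StarSubalgebra ℂ C(Circle, ℂ) where
  toSubalgebra := Algebra.adjoin ℂ (range char)
  star_mem' := by
    show Algebra.adjoin ℂ (range char) ≤ star (Algebra.adjoin ℂ (range char))
    refine Algebra.adjoin_le ?_
    rintro - ⟨n, rfl⟩
    refine Algebra.subset_adjoin ⟨-n, ?_⟩
    ext z
    simp only [char_apply, ContinuousMap.star_apply, RCLike.star_def]
    rw [map_zpow₀, ← Circle.coe_inv_eq_conj, Circle.coe_inv, inv_zpow, zpow_neg]

theorem charSubalgebra_coe :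
    Subalgebra.toSubmodule charSubalgebra.toSubalgebra = span ℂ (range char) := by
  apply Algebra.adjoin_eq_span_of_subset
  refine Subset.trans ?_ Submodule.subset_span
  intro x hx
  refine Submonoid.closure_induction (fun _ => id) ⟨0, ?_⟩ ?_ hx
  · ext1 z; simp
  · rintro - - - - ⟨m, rfl⟩ ⟨n, rfl⟩
    refine ⟨m + n, ?_⟩
    ext1 z
    simp [zpow_add₀ (Circle.coe_ne_zero z)]

theorem charSubalgebra_separatesPoints : charSubalgebra.SeparatesPoints := by
  intro x y hxy
  refine ⟨_, ⟨char 1, Algebra.subset_adjoin ⟨1, rfl⟩, rfl⟩, ?_⟩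
  simpa [Circle.coe_inj] using hxy

theorem charSubalgebra_closure_eq_top : charSubalgebra.topologicalClosure = ⊤ :=
  ContinuousMap.starSubalgebra_topologicalClosure_eq_top_of_separatesPoints charSubalgebra
    charSubalgebra_separatesPoints

theorem span_char_closure_eq_top : (span ℂ (range char)).topologicalClosure = ⊤ := by
  rw [← charSubalgebra_coe]
  exact congr_arg (Subalgebra.toSubmodule <| StarSubalgebra.toSubalgebra ·)
    charSubalgebra_closure_eq_top

lemma integrable_of_continuous {E : Type*} [NormedAddCommGroup E] {f : Circle → E}
    (hf : Continuous f) : Integrable f (Measure.haar : Measure Circle) :=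
  hf.integrable_of_hasCompactSupport (HasCompactSupport.of_compactSpace f)

variable {A : Type*} [NonUnitalCStarAlgebra A]

/-- A star-algebra automorphism of a C*-algebra as a continuous linear map. -/
noncomputable def rhoCLM (e : A ≃⋆ₐ[ℂ] A) : A →L[ℂ] A :=
  LinearMap.mkContinuous
    { toFun := e, map_add' := map_add e, map_smul' := map_smul e } 1
    (fun a => by simpa using (StarAlgEquiv.norm_map e a).le)

@[simp] lemma rhoCLM_apply (e : A ≃⋆ₐ[ℂ] A) (a : A) : rhoCLM e a = e a := rfl

/-- Integration of a scalar function against a fixed continuous vector-valued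
function, as a continuous linear map. -/
noncomputable def Tint (f : Circle → A) (hf : Continuous f) : C(Circle, ℂ) →L[ℂ] A :=
  LinearMap.mkContinuous
    { toFun := fun g => ∫ z, g z • f z ∂(Measure.haar : Measure Circle)
      map_add' := fun g g' => by
        simp only [ContinuousMap.add_apply, add_smul]
        exact integral_add
          (integrable_of_continuous (g.continuous.smul hf))
          (integrable_of_continuous (g'.continuous.smul hf))
      map_smul' := fun c g => by
        simp only [ContinuousMap.smul_apply, smul_assoc, RingHom.id_apply]
        rw [integral_smul] }
    (∫ z, ‖f z‖ ∂(Measure.haar : Measure Circle))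
    (fun g => by
      refine le_trans (norm_integral_le_integral_norm _) ?_
      have h1 : ∀ z : Circle, ‖g z • f z‖ ≤ ‖g‖ * ‖f z‖ := fun z => by
        rw [norm_smul]
        exact mul_le_mul_of_nonneg_right (g.norm_coe_le_norm z) (norm_nonneg _)
      calc ∫ z, ‖g z • f z‖ ∂(Measure.haar : Measure Circle)
          ≤ ∫ z, ‖g‖ * ‖f z‖ ∂(Measure.haar : Measure Circle) := by
            refine integral_mono ((integrable_of_continuous (g.continuous.smul hf)).norm)
              ((integrable_of_continuous hf).norm.const_mul _) h1
        _ = (∫ z, ‖f z‖ ∂(Measure.haar : Measure Circle)) * ‖g‖ := by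
            rw [integral_const_mul, mul_comm])

lemma Tint_apply (f : Circle → A) (hf : Continuous f) (g : C(Circle, ℂ)) :
    Tint f hf g = ∫ z, g z • f z ∂(Measure.haar : Measure Circle) := rfl

end Stmt12Aux

open Stmt12Aux

/-- for a (pointwise continuous) action `ρ` of the circle group on a
C*-algebra `A` by *-automorphisms, the linear span of the homogeneous elements
(those `a` with `ρ z a = zⁿ • a` for some `n ∈ ℤ` and all `z`) is norm-dense in `A`. -/
theorem stmt12 {A : Type*} [NonUnitalCStarAlgebra A]
    (ρ : Circle → (A ≃⋆ₐ[ℂ] A))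
    (hρmul : ∀ z w : Circle, ∀ a : A, ρ (z * w) a = ρ z (ρ w a))
    (hcont : ∀ a : A, Continuous fun z : Circle => ρ z a) :
    Dense (↑(Submodule.span ℂ
      {a : A | ∃ n : ℤ, ∀ z : Circle, ρ z a = (z : ℂ) ^ n • a}) : Set A) := by
  set μ : Measure Circle := Measure.haar with hμ
  set P : Set A := {a : A | ∃ n : ℤ, ∀ z : Circle, ρ z a = (z : ℂ) ^ n • a} with hP
  set M : Submodule ℂ A := (Submodule.span ℂ P).topologicalClosure with hM
  -- it suffices to show every element is in the closure of the span
  rw [Submodule.dense_iff_topologicalClosure_eq_top]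
  rw [Submodule.eq_top_iff']
  intro a
  show a ∈ M
  have hρ1 : ∀ x : A, ρ 1 x = x := by
    intro x
    have h := hρmul 1 1 x
    rw [one_mul] at h
    exact ((ρ 1).injective h).symm
  have hfa : Continuous fun z : Circle => ρ z a := hcont a
  -- Step 1: `Tint` of any continuous scalar function lands in `M`.
  have key : ∀ g : C(Circle, ℂ), Tint (fun z => ρ z a) hfa g ∈ M := by
    have hsub : Submodule.span ℂ (Set.range char) ≤
        M.comap (Tint (fun z => ρ z a) hfa : C(Circle, ℂ) →ₗ[ℂ] A) := by
      rw [Submodule.span_le]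
      rintro - ⟨n, rfl⟩
      -- `Tint (char n)` is homogeneous of degree `-n`
      refine Submodule.mem_comap.mpr (Submodule.le_topologicalClosure _ ?_)
      refine Submodule.subset_span ?_
      refine ⟨-n, fun w => ?_⟩
      have hint : Integrable (fun z : Circle => (z : ℂ) ^ n • ρ z a) μ :=
        integrable_of_continuous (((char n).continuous).smul hfa)
      calc ρ w (Tint (fun z => ρ z a) hfa (char n))
          = rhoCLM (ρ w) (∫ z, (z : ℂ) ^ n • ρ z a ∂μ) := rfl
        _ = ∫ z, rhoCLM (ρ w) ((z : ℂ) ^ n • ρ z a) ∂μ :=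
            (ContinuousLinearMap.integral_comp_comm _ hint).symm
        _ = ∫ z, (z : ℂ) ^ n • ρ (w * z) a ∂μ := by
            refine integral_congr_ae (Filter.Eventually.of_forall fun z => ?_)
            simp only [rhoCLM_apply, _root_.map_smul, ← hρmul]
        _ = ∫ z, ((w⁻¹ * z : Circle) : ℂ) ^ n • ρ (w * (w⁻¹ * z)) a ∂μ :=
            (integral_mul_left_eq_self
              (fun z : Circle => ((z : Circle) : ℂ) ^ n • ρ (w * z) a) w⁻¹).symm
        _ = ∫ z, (w : ℂ) ^ (-n) • ((z : ℂ) ^ n • ρ z a) ∂μ := by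
            refine integral_congr_ae (Filter.Eventually.of_forall fun z => ?_)
            dsimp only
            rw [smul_smul]
            congr 1
            · rw [Circle.coe_mul, Circle.coe_inv, mul_zpow, inv_zpow, ← zpow_neg]
            · rw [mul_inv_cancel_left]
        _ = (w : ℂ) ^ (-n) • Tint (fun z => ρ z a) hfa (char n) := integral_smul _ _
    intro g
    have hMc : IsClosed (M : Set A) := (Submodule.span ℂ P).isClosed_topologicalClosure
    have hclosed : IsClosed
        ((M.comap (Tint (fun z => ρ z a) hfa : C(Circle, ℂ) →ₗ[ℂ] A) : Set C(Circle, ℂ))) := by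
      rw [Submodule.comap_coe]
      exact hMc.preimage (Tint (fun z => ρ z a) hfa).continuous
    have := Submodule.topologicalClosure_minimal _ hsub hclosed
    rw [span_char_closure_eq_top] at this
    exact this (Submodule.mem_top : g ∈ ⊤)
  -- Step 2: approximate `a` by `Tint g` for bump functions `g`.
  have hMclosed : IsClosed (M : Set A) := (Submodule.span ℂ P).isClosed_topologicalClosure
  rw [← SetLike.mem_coe, ← hMclosed.closure_eq, Metric.mem_closure_iff]
  intro ε hε
  -- continuity of `z ↦ ρ z a` at 1 gives a suitable δ
  obtain ⟨δ, hδpos, hδ⟩ := Metric.continuousAt_iff.mp (hfa.continuousAt (x := 1))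
    (ε / 2) (half_pos hε)
  -- the bump function
  set h : Circle → ℝ := fun z => max 0 (δ - dist z 1) with hh
  have hhcont : Continuous h := continuous_const.max
    (continuous_const.sub (continuous_id.dist continuous_const))
  have hhnn : ∀ z, 0 ≤ h z := fun z => le_max_left _ _
  have hhint : Integrable h μ := integrable_of_continuous hhcont
  have hsupp : Function.support h = Metric.ball 1 δ := by
    ext z
    simp only [Function.mem_support, hh, Metric.mem_ball]
    constructor
    · intro hz
      by_contra hcon
      push_neg at hcon
      exact hz (max_eq_left (by linarith))
    · intro hz
      have : 0 < δ - dist z 1 := by linarith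
      rw [max_eq_right this.le]
      exact this.ne'
  have hc : 0 < ∫ z, h z ∂μ := by
    rw [integral_pos_iff_support_of_nonneg hhnn hhint, hsupp]
    exact Metric.isOpen_ball.measure_pos μ ⟨1, by simpa using hδpos⟩
  set c : ℝ := ∫ z, h z ∂μ with hcdef
  set g : C(Circle, ℂ) := ⟨fun z => ((c⁻¹ * h z : ℝ) : ℂ),
    Complex.continuous_ofReal.comp (continuous_const.mul hhcont)⟩ with hg
  refine ⟨Tint (fun z => ρ z a) hfa g, SetLike.mem_coe.mpr (key g), ?_⟩
  have hint1 : Integrable (fun z : Circle => (c⁻¹ * h z) • a) μ :=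
    (integrable_of_continuous (continuous_const.mul hhcont)).smul_const a
  have hint2 : Integrable (fun z : Circle => (c⁻¹ * h z) • ρ z a) μ :=
    integrable_of_continuous ((continuous_const.mul hhcont).smul hfa)
  have hTg : Tint (fun z => ρ z a) hfa g = ∫ z, (c⁻¹ * h z) • ρ z a ∂μ := by
    rw [Tint_apply]
    refine integral_congr_ae (Filter.Eventually.of_forall fun z => ?_)
    show ((c⁻¹ * h z : ℝ) : ℂ) • ρ z a = (c⁻¹ * h z) • ρ z a
    rw [Complex.coe_smul]
  have ha : a = ∫ z, (c⁻¹ * h z) • a ∂μ := by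
    rw [integral_smul_const]
    have : ∫ z, c⁻¹ * h z ∂μ = 1 := by
      rw [integral_const_mul, ← hcdef, inv_mul_cancel₀ hc.ne']
    rw [this, one_smul]
  rw [dist_eq_norm, hTg]
  have hdiff : a - ∫ z, (c⁻¹ * h z) • ρ z a ∂μ
      = ∫ z, (c⁻¹ * h z) • (a - ρ z a) ∂μ := by
    rw [show (fun z : Circle => (c⁻¹ * h z) • (a - ρ z a))
        = fun z : Circle => (c⁻¹ * h z) • a - (c⁻¹ * h z) • ρ z a by
      funext z; rw [smul_sub]]
    rw [integral_sub hint1 hint2, ← ha]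
  rw [hdiff]
  have hbound : ∀ z : Circle, ‖(c⁻¹ * h z) • (a - ρ z a)‖ ≤ c⁻¹ * h z * (ε / 2) := by
    intro z
    rw [norm_smul, Real.norm_eq_abs, abs_of_nonneg (mul_nonneg (inv_nonneg.mpr hc.le) (hhnn z))]
    rcases eq_or_ne (h z) 0 with h0 | h0
    · simp [h0]
    · have hz : dist z 1 < δ := by
        have := Function.mem_support.mpr h0
        rwa [hsupp, Metric.mem_ball] at this
      have := hδ hz
      rw [hρ1 a] at this
      rw [dist_eq_norm] at this
      have hnorm : ‖a - ρ z a‖ ≤ ε / 2 := by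
        rw [norm_sub_rev] at this
        exact this.le
      exact mul_le_mul_of_nonneg_left hnorm (mul_nonneg (inv_nonneg.mpr hc.le) (hhnn z))
  calc ‖∫ z, (c⁻¹ * h z) • (a - ρ z a) ∂μ‖
      ≤ ∫ z, ‖(c⁻¹ * h z) • (a - ρ z a)‖ ∂μ := norm_integral_le_integral_norm _
    _ ≤ ∫ z, c⁻¹ * h z * (ε / 2) ∂μ := by
        refine integral_mono ?_ ?_ hbound
        · exact (integrable_of_continuous
            ((continuous_const.mul hhcont).smul (continuous_const.sub hfa))).norm
        · exact ((integrable_of_continuous (continuous_const.mul hhcont)).mul_const _)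
    _ = ε / 2 := by
        rw [integral_mul_const, integral_const_mul, ← hcdef, inv_mul_cancel₀ hc.ne', one_mul]
    _ < ε := half_lt_self hε
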